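/- The number of orbits under simultaneous cyclic rotation and the symbol-swap 0↔1 (the group C_n^Π) acting on binary words of length n equals (1/(2n))·[Σ_{d|n, d odd} φ(d)·2^{n/d} + 2·Σ_{d|n, d even} φ(d)·2^{n/d}]. -/

import Mathlib

open Finset AddAction

namespace PermutedNecklaceAux

variable {n : ℕ} [NeZero n]

abbrev Wd (n : ℕ) := ZMod n → ZMod 2

instance : VAdd (ZMod n × ZMod 2) (Wd n) :=
  ⟨fun g w => fun i => g.2 + w (i + g.1)⟩

omit [NeZero n] in
lemma vadd_apply (g : ZMod n × ZMod 2) (w : Wd n) (i : ZMod n) :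
    (g +ᵥ w) i = g.2 + w (i + g.1) := rfl

instance : AddAction (ZMod n × ZMod 2) (Wd n) where
  zero_vadd w := by funext i; simp [vadd_apply]
  add_vadd g h w := by
    funext i
    simp only [vadd_apply, Prod.fst_add, Prod.snd_add, add_assoc]

omit [NeZero n] in
lemma rel_iff (w₁ w₂ : Wd n) :
    (∃ l : ZMod n, w₁ = (fun i => w₂ (i + l)) ∨ w₁ = fun i => 1 - w₂ (i + l))
      ↔ Setoid.r (self := AddAction.orbitRel (ZMod n × ZMod 2) (Wd n)) w₁ w₂ := by
  change _ ↔ w₁ ∈ AddAction.orbit _ w₂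
  rw [AddAction.mem_orbit_iff]
  have key : ∀ a : ZMod 2, 1 + a = 1 - a := by decide
  constructor
  · rintro ⟨l, h | h⟩
    · exact ⟨(l, 0), by funext i; simp [vadd_apply, h]⟩
    · exact ⟨(l, 1), by funext i; simp [vadd_apply, h, key]⟩
  · rintro ⟨⟨l, e⟩, rfl⟩
    refine ⟨l, ?_⟩
    rcases (show ∀ e : ZMod 2, e = 0 ∨ e = 1 by decide) e with rfl | rfl
    · left; funext i; simp [vadd_apply]
    · right; funext i; simp [vadd_apply, key]

omit [NeZero n] in
lemma invariant_zsmul {l : ZMod n} {w : Wd n} (hw : ∀ i, w (i + l) = w i)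
    (k : ℤ) (x : ZMod n) : w (x + k • l) = w x := by
  induction k using Int.induction_on with
  | zero => simp
  | succ k ih =>
      have h1 := hw (x + (k : ℤ) • l)
      rw [show x + ((k : ℤ) + 1) • l = x + (k : ℤ) • l + l by rw [add_smul, one_smul, add_assoc]]
      rw [h1, ih]
  | pred k ih =>
      have h1 := hw (x + (-(k : ℤ) - 1) • l)
      rw [show x + (-(k : ℤ) - 1) • l + l = x + (-(k : ℤ)) • l by
        rw [add_assoc, sub_smul, one_smul, sub_add_cancel]] at h1
      rw [← h1]; exact ih

lemma card_fix0 (l : ZMod n) :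
    Nat.card {w : Wd n // ∀ i, w (i + l) = w i} = 2 ^ (n / addOrderOf l) := by
  have hEquiv : {w : Wd n // ∀ i, w (i + l) = w i} ≃
      ((ZMod n ⧸ AddSubgroup.zmultiples l) → ZMod 2) :=
    { toFun := fun w => Quotient.lift w.1 (by
        intro a b hab
        obtain ⟨k, hk⟩ := QuotientAddGroup.leftRel_apply.mp hab
        have hb : b = a + k • l := by rw [show k • l = -a + b from hk]; abel
        rw [hb, invariant_zsmul w.2])
      invFun := fun f => ⟨fun i => f (QuotientAddGroup.mk i), by
        intro i
        have : (QuotientAddGroup.mk (i + l) : ZMod n ⧸ AddSubgroup.zmultiples l)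
            = QuotientAddGroup.mk i := by
          refine QuotientAddGroup.eq.mpr ?_
          refine AddSubgroup.mem_zmultiples_iff.mpr ⟨-1, ?_⟩
          simp
        dsimp only
        rw [this]⟩
      left_inv := fun w => rfl
      right_inv := fun f => by
        funext q
        induction q using QuotientAddGroup.induction_on
        rfl }
  have h1 : (AddSubgroup.zmultiples l).index * Nat.card (AddSubgroup.zmultiples l)
      = Nat.card (ZMod n) := AddSubgroup.index_mul_card _
  rw [Nat.card_zmultiples, Nat.card_zmod] at h1
  have h2 : 0 < addOrderOf l := addOrderOf_pos l
  have h3 : Nat.card (ZMod n ⧸ AddSubgroup.zmultiples l) = n / addOrderOf l := by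
    rw [show Nat.card (ZMod n ⧸ AddSubgroup.zmultiples l) = (AddSubgroup.zmultiples l).index
      from rfl]
    exact (Nat.div_eq_of_eq_mul_left h2 h1.symm).symm
  rw [Nat.card_congr hEquiv, Nat.card_fun, Nat.card_zmod, h3]

omit [NeZero n] in
lemma flip_nsmul {l : ZMod n} {w : Wd n} (hw : ∀ i, w (i + l) = w i + 1)
    (k : ℕ) (x : ZMod n) : w (x + k • l) = w x + (k : ZMod 2) := by
  induction k with
  | zero => simp
  | succ k ih =>
      rw [show x + (k + 1 : ℕ) • l = x + k • l + l by rw [add_nsmul, one_nsmul, add_assoc]]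
      rw [hw, ih]
      push_cast
      ring

omit [NeZero n] in
lemma fix1_isEmpty {l : ZMod n} (hd : Odd (addOrderOf l)) :
    IsEmpty {w : Wd n // ∀ i, w (i + l) = w i + 1} := by
  constructor
  rintro ⟨w, hw⟩
  have h1 := flip_nsmul hw (addOrderOf l) 0
  rw [addOrderOf_nsmul_eq_zero, add_zero] at h1
  obtain ⟨q, hq⟩ := hd
  rw [hq] at h1
  push_cast at h1
  rw [show ((2 : ZMod 2) * q + 1) = 1 by rw [show (2 : ZMod 2) = 0 from rfl]; ring] at h1
  exact (show ∀ a : ZMod 2, a ≠ a + 1 by decide) (w 0) h1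

lemma exists_flip (l : ZMod n) (hd : Even (addOrderOf l)) :
    ∃ w₀ : Wd n, ∀ i, w₀ (i + l) = w₀ i + 1 := by
  obtain ⟨d, hd_def⟩ : ∃ d, d = addOrderOf l := ⟨_, rfl⟩
  rw [← hd_def] at hd
  have npos : 0 < n := Nat.pos_of_ne_zero (NeZero.ne n)
  set g := n.gcd l.val with hg_def
  have hl : ((l.val : ℕ) : ZMod n) = l := ZMod.natCast_rightInverse l
  have hdg : d = n / g := by
    rw [hd_def, ← hl, ZMod.addOrderOf_coe _ (NeZero.ne n)]
  have gdvd : g ∣ n := Nat.gcd_dvd_left _ _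
  have gpos : 0 < g := Nat.gcd_pos_of_pos_left _ npos
  have hgd : g * d = n := by rw [hdg]; exact Nat.mul_div_cancel' gdvd
  have dpos : 0 < d := hd_def ▸ addOrderOf_pos l
  have d2 : 2 ≤ d := by
    have := hd.two_dvd
    omega
  have : NeZero d := ⟨by omega⟩
  set u := l.val / g with hu_def
  have hu : g * u = l.val := Nat.mul_div_cancel' (Nat.gcd_dvd_right _ _)
  have cop : Nat.Coprime u d := by
    rw [hu_def, hdg]
    exact (Nat.coprime_div_gcd_div_gcd (m := n) (n := l.val) gpos).symm
  set c := ((u : ZMod d)⁻¹).val with hc_def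
  have hmod : (u * c) % d = 1 % d := by
    have h1 : (u : ZMod d) * (u : ZMod d)⁻¹ = 1 := ZMod.coe_mul_inv_eq_one u cop
    have h2 : ((u * c : ℕ) : ZMod d) = ((1 : ℕ) : ZMod d) := by
      push_cast
      rw [hc_def, ZMod.natCast_rightInverse, h1]
    exact (ZMod.natCast_eq_natCast_iff _ _ _).mp h2
  have hlc : l * ((c : ℕ) : ZMod n) = ((g : ℕ) : ZMod n) := by
    have h3 : (l.val * c) ≡ g [MOD n] := by
      have := Nat.ModEq.mul_left' (c := g) (show u * c ≡ 1 [MOD d] from hmod)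
      rw [hgd] at this
      calc l.val * c = g * (u * c) := by rw [← hu]; ring
        _ ≡ g * 1 [MOD n] := this
        _ = g := by ring
    have h4 := (ZMod.natCast_eq_natCast_iff _ _ _).mpr h3
    push_cast at h4
    rw [hl] at h4
    exact h4
  have hg_lt : g < n := by
    rcases Nat.lt_or_ge g n with h | h
    · exact h
    · exfalso
      have : g = n := le_antisymm (Nat.le_of_dvd npos gdvd) h
      rw [this, Nat.div_self npos] at hdg
      omega
  have key : ∀ y : ZMod n,
      (((y + ((g : ℕ) : ZMod n)).val / g : ℕ) : ZMod 2) = ((y.val / g : ℕ) : ZMod 2) + 1 := by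
    intro y
    have hval : (y + ((g : ℕ) : ZMod n)).val = (y.val + g) % n := by
      rw [ZMod.val_add, ZMod.val_cast_of_lt hg_lt]
    have hyv : y.val < n := ZMod.val_lt y
    rcases Nat.lt_or_ge (y.val + g) n with h | h
    · rw [hval, Nat.mod_eq_of_lt h, Nat.add_div_right _ gpos]
      push_cast
      ring
    · have hring : (d - 1) * g + g = g * d := by
        obtain ⟨d', rfl⟩ : ∃ d', d = d' + 1 := ⟨d - 1, by omega⟩
        simp [Nat.mul_comm]
        ring
      have h1 : (y.val + g) % n = y.val + g - n := by
        rw [Nat.mod_eq_sub_mod h, Nat.mod_eq_of_lt (by omega)]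
      have h2 : (y.val + g - n) / g = 0 := Nat.div_eq_of_lt (by omega)
      have h3 : y.val / g = d - 1 := by
        apply Nat.div_eq_of_lt_le
        · omega
        · have : (d - 1 + 1) * g = g * d := by
            rw [show d - 1 + 1 = d by omega]; ring
          omega
      rw [hval, h1, h2, h3]
      have hkodd : Odd (d - 1) := Nat.Even.sub_odd (by omega) hd odd_one
      obtain ⟨q, hq⟩ := hkodd
      rw [hq]
      push_cast
      ring_nf
      simp [show ((2 : ZMod 2)) = 0 from rfl]
  refine ⟨fun x => (((x * ((c : ℕ) : ZMod n)).val / g : ℕ) : ZMod 2), ?_⟩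
  intro i
  have : (i + l) * ((c : ℕ) : ZMod n) = i * ((c : ℕ) : ZMod n) + ((g : ℕ) : ZMod n) := by
    rw [add_mul, hlc]
  dsimp only
  rw [this, key]

lemma card_fixedBy_eq (l : ZMod n) (e : ZMod 2) :
    Nat.card (AddAction.fixedBy (Wd n) ((l, e) : ZMod n × ZMod 2)) =
      if e = 0 then 2 ^ (n / addOrderOf l)
      else if Even (addOrderOf l) then 2 ^ (n / addOrderOf l) else 0 := by
  have hmem : ∀ w : Wd n, w ∈ AddAction.fixedBy (Wd n) ((l, e) : ZMod n × ZMod 2)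
      ↔ ∀ i, e + w (i + l) = w i := by
    intro w
    rw [AddAction.mem_fixedBy]
    constructor
    · intro h i; exact congrFun h i
    · intro h; funext i; exact h i
  rcases (show ∀ e : ZMod 2, e = 0 ∨ e = 1 by decide) e with rfl | rfl
  · rw [if_pos rfl, ← card_fix0 l]
    apply Nat.card_congr
    refine Equiv.subtypeEquivRight fun w => ?_
    rw [hmem]
    constructor
    · intro h i; have := h i; rwa [zero_add] at this
    · intro h i; rw [zero_add]; exact h i
  · have hone : (1 : ZMod 2) ≠ 0 := by decide
    rw [if_neg hone]
    have hiff : ∀ w : Wd n, w ∈ AddAction.fixedBy (Wd n) ((l, (1 : ZMod 2)) : ZMod n × ZMod 2)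
        ↔ ∀ i, w (i + l) = w i + 1 := by
      intro w
      rw [hmem]
      have h12 : ∀ a b : ZMod 2, (1 + a = b) ↔ (a = b + 1) := by decide
      exact forall_congr' fun i => h12 _ _
    by_cases hpar : Even (addOrderOf l)
    · rw [if_pos hpar, ← card_fix0 l]
      obtain ⟨w₀, hw₀⟩ := exists_flip l hpar
      apply Nat.card_congr
      have habb : ∀ a b : ZMod 2, a + b + b = a := by decide
      have e2 : {w : Wd n // ∀ i, w (i + l) = w i + 1} ≃ {w : Wd n // ∀ i, w (i + l) = w i} :=
        { toFun := fun w => ⟨fun i => w.1 i + w₀ i, fun i => by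
            dsimp only
            rw [w.2 i, hw₀ i]
            exact (show ∀ a b : ZMod 2, a + 1 + (b + 1) = a + b by decide) _ _⟩
          invFun := fun w => ⟨fun i => w.1 i + w₀ i, fun i => by
            dsimp only
            rw [w.2 i, hw₀ i]
            exact (show ∀ a b : ZMod 2, a + (b + 1) = a + b + 1 by decide) _ _⟩
          left_inv := fun w => Subtype.ext (funext fun i => habb _ _)
          right_inv := fun w => Subtype.ext (funext fun i => habb _ _) }
      exact (Equiv.subtypeEquivRight hiff).trans e2
    · rw [if_neg hpar]
      have hodd : Odd (addOrderOf l) := Nat.not_even_iff_odd.mp hpar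
      have hE : IsEmpty {w : Wd n // ∀ i, w (i + l) = w i + 1} := fix1_isEmpty hodd
      have : IsEmpty (AddAction.fixedBy (Wd n) ((l, (1 : ZMod 2)) : ZMod n × ZMod 2)) :=
        (Equiv.subtypeEquivRight hiff).isEmpty
      exact Nat.card_of_isEmpty

lemma sum_by_order (F : ℕ → ℕ) :
    ∑ l : ZMod n, F (addOrderOf l) = ∑ d ∈ n.divisors, Nat.totient d * F d := by
  classical
  rw [← Finset.sum_fiberwise_of_maps_to (g := fun l : ZMod n => addOrderOf l)
    (t := n.divisors) (fun l _ => by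
      rw [Nat.mem_divisors]
      refine ⟨?_, NeZero.ne n⟩
      have h := addOrderOf_dvd_card (x := l)
      rwa [ZMod.card] at h)
    (fun l => F (addOrderOf l))]
  apply Finset.sum_congr rfl
  intro d hd
  rw [Nat.mem_divisors] at hd
  have hstep : ∑ l ∈ univ.filter (fun l : ZMod n => addOrderOf l = d), F (addOrderOf l)
      = ∑ l ∈ univ.filter (fun l : ZMod n => addOrderOf l = d), F d := by
    apply Finset.sum_congr rfl
    intro l hl
    rw [mem_filter] at hl
    rw [hl.2]
  rw [hstep, Finset.sum_const, smul_eq_mul]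
  congr 1
  have := IsAddCyclic.card_addOrderOf_eq_totient (α := ZMod n) (d := d)
    (by rw [ZMod.card]; exact hd.1)
  convert this using 2

theorem main_zmod (n : ℕ) [NeZero n] :
    2 * n * Nat.card (Quot (fun w₁ w₂ : ZMod n → ZMod 2 =>
        ∃ l : ZMod n, w₁ = (fun i => w₂ (i + l)) ∨ w₁ = fun i => 1 - w₂ (i + l)))
      = ∑ d ∈ n.divisors.filter (fun d => Odd d), Nat.totient d * 2 ^ (n / d) +
        2 * ∑ d ∈ n.divisors.filter (fun d => Even d), Nat.totient d * 2 ^ (n / d) := by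
  classical
  have hrel : (fun w₁ w₂ : Wd n =>
      ∃ l : ZMod n, w₁ = (fun i => w₂ (i + l)) ∨ w₁ = fun i => 1 - w₂ (i + l))
      = fun w₁ w₂ => Setoid.r (self := AddAction.orbitRel (ZMod n × ZMod 2) (Wd n)) w₁ w₂ :=
    funext fun w₁ => funext fun w₂ => propext (rel_iff w₁ w₂)
  have hq : Nat.card (Quot (fun w₁ w₂ : Wd n =>
      ∃ l : ZMod n, w₁ = (fun i => w₂ (i + l)) ∨ w₁ = fun i => 1 - w₂ (i + l)))
      = Nat.card (AddAction.orbitRel.Quotient (ZMod n × ZMod 2) (Wd n)) := by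
    rw [hrel]; rfl
  have hB := AddAction.sum_card_fixedBy_eq_card_orbits_mul_card_addGroup
    (ZMod n × ZMod 2) (Wd n)
  have hGcard : Fintype.card (ZMod n × ZMod 2) = n * 2 := by
    rw [Fintype.card_prod, ZMod.card, ZMod.card]
  rw [hGcard, Fintype.sum_prod_type] at hB
  have hInner : ∀ l : ZMod n, ∑ e : ZMod 2, Fintype.card (AddAction.fixedBy (Wd n)
      ((l, e) : ZMod n × ZMod 2))
      = 2 ^ (n / addOrderOf l) + (if Even (addOrderOf l) then 2 ^ (n / addOrderOf l) else 0) := by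
    intro l
    rw [show (Finset.univ : Finset (ZMod 2)) = {0, 1} by decide,
      Finset.sum_insert (by decide), Finset.sum_singleton]
    rw [← Nat.card_eq_fintype_card, ← Nat.card_eq_fintype_card,
      card_fixedBy_eq, card_fixedBy_eq, if_pos rfl, if_neg (by decide)]
  rw [Finset.sum_congr rfl (fun l _ => hInner l)] at hB
  rw [Finset.sum_add_distrib] at hB
  rw [sum_by_order (fun d => 2 ^ (n / d)),
    sum_by_order (fun d => if Even d then 2 ^ (n / d) else 0)] at hB
  have hsplit : ∑ d ∈ n.divisors, Nat.totient d * 2 ^ (n / d)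
      = ∑ d ∈ n.divisors.filter (fun d => Odd d), Nat.totient d * 2 ^ (n / d)
        + ∑ d ∈ n.divisors.filter (fun d => Even d), Nat.totient d * 2 ^ (n / d) := by
    rw [← Finset.sum_filter_add_sum_filter_not n.divisors (fun d => Odd d)]
    congr 1
    apply Finset.sum_congr _ (fun _ _ => rfl)
    apply Finset.filter_congr
    intro d _
    rw [Nat.not_odd_iff_even]
  have hev : ∑ d ∈ n.divisors, Nat.totient d * (if Even d then 2 ^ (n / d) else 0)
      = ∑ d ∈ n.divisors.filter (fun d => Even d), Nat.totient d * 2 ^ (n / d) := by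
    rw [Finset.sum_filter]
    apply Finset.sum_congr rfl
    intro d _
    split <;> simp
  rw [hsplit, hev] at hB
  rw [hq]
  set X := Nat.card (AddAction.orbitRel.Quotient (ZMod n × ZMod 2) (Wd n)) with hX
  have hXf : Fintype.card (AddAction.orbitRel.Quotient (ZMod n × ZMod 2) (Wd n)) = X := by
    rw [hX, Nat.card_eq_fintype_card]
  rw [hXf] at hB
  calc 2 * n * X = X * (n * 2) := by ring
    _ = _ := by rw [← hB]; ring

end PermutedNecklaceAux

theorem permuted_necklace_count_binary (n : ℕ) (hn : 0 < n) :
    2 * n * Nat.card (Quot (fun w₁ w₂ : Fin n → Fin 2 =>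
        ∃ l : Fin n, w₁ = (fun i => w₂ (i + l)) ∨ w₁ = fun i => 1 - w₂ (i + l)))
      = ∑ d ∈ n.divisors.filter (fun d => Odd d), Nat.totient d * 2 ^ (n / d) +
        2 * ∑ d ∈ n.divisors.filter (fun d => Even d), Nat.totient d * 2 ^ (n / d) := by
  obtain ⟨m, rfl⟩ := Nat.exists_eq_succ_of_ne_zero hn.ne'
  exact PermutedNecklaceAux.main_zmod (m + 1)
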